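/- arXiv:1312.7186 — 5 statements merged into one kernel-verified Lean document; each statement's English description precedes it below -/
import Mathlib

section
/- For any two real scalars w and v, the quantile check function satisfies ρ_τ(w−v) − ρ_τ(w) = −v(τ − 1{w ≤ 0}) + ∫₀^v (1{w ≤ z} − 1{w ≤ 0}) dz, where ρ_τ(t) = t(τ − 1{t ≤ 0}). -/
open intervalIntegral

lemma knight_aux (w v : ℝ) :
    ∫ z in (0:ℝ)..v, (if w ≤ z then (1:ℝ) else 0) =
      max (v - w) 0 - max (0 - w) 0 := by
  have hint : IntervalIntegrable (fun z => if w ≤ z then (1:ℝ) else 0) MeasureTheory.volume 0 v := by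
    rw [intervalIntegrable_iff]
    have : (fun z => if w ≤ z then (1:ℝ) else 0) = (Set.Ici w).indicator (fun _ => (1:ℝ)) := by
      funext z
      simp [Set.indicator, Set.mem_Ici]
    rw [this]
    exact (MeasureTheory.integrableOn_const (by
      rw [Set.uIoc]; exact measure_Ioc_lt_top.ne)).indicator measurableSet_Ici
  have key := intervalIntegral.integral_eq_sub_of_hasDeriv_right
    (f := fun z => max (z - w) 0) (f' := fun z => if w ≤ z then (1:ℝ) else 0)
    (a := 0) (b := v)
    (by fun_prop)
    ?_ hint
  · simpa using key
  · intro x _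
    rcases le_or_gt w x with h | h
    · have : ∀ᶠ z in nhdsWithin x (Set.Ioi x), max (z - w) 0 = z - w := by
        filter_upwards [self_mem_nhdsWithin] with z hz
        have : w ≤ z := h.trans (le_of_lt hz)
        simp [max_eq_left, sub_nonneg.2 this]
      have hd : HasDerivWithinAt (fun z => z - w) 1 (Set.Ioi x) x :=
        ((hasDerivAt_id x).sub_const w).hasDerivWithinAt
      simp only [if_pos h]
      refine hd.congr_of_eventuallyEq ?_ ?_
      · filter_upwards [self_mem_nhdsWithin] with z hz
        have : w ≤ z := h.trans (le_of_lt hz)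
        simp [max_eq_left (sub_nonneg.2 this)]
      · simp [max_eq_left (sub_nonneg.2 h)]
    · have hd : HasDerivWithinAt (fun _ : ℝ => (0:ℝ)) 0 (Set.Ioi x) x :=
        (hasDerivAt_const x 0).hasDerivWithinAt
      simp only [if_neg (not_le.2 h)]
      refine hd.congr_of_eventuallyEq ?_ ?_
      · filter_upwards [Ioo_mem_nhdsGT_of_mem (Set.left_mem_Ico.2 h)] with z hz
        simp [max_eq_right (by linarith [hz.2] : z - w ≤ 0)]
      · simp [max_eq_right (by linarith : x - w ≤ 0)]

/-- Knight's identity: for the quantile check function `ρ_τ(t) = t(τ − 1{t ≤ 0})`,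
for any real scalars `w` and `v`,
`ρ_τ(w−v) − ρ_τ(w) = −v(τ − 1{w ≤ 0}) + ∫₀^v (1{w ≤ z} − 1{w ≤ 0}) dz`. -/
theorem knight_identity (τ : ℝ) (hτ : τ ∈ Set.Ioo (0:ℝ) 1) (w v : ℝ) :
    (w - v) * (τ - if w - v ≤ 0 then 1 else 0) - w * (τ - if w ≤ 0 then 1 else 0) =
      -v * (τ - if w ≤ 0 then 1 else 0) +
        ∫ z in (0:ℝ)..v, ((if w ≤ z then (1:ℝ) else 0) - if w ≤ 0 then 1 else 0) := by
  have hint : IntervalIntegrable (fun z => if w ≤ z then (1:ℝ) else 0) MeasureTheory.volume 0 v := by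
    rw [intervalIntegrable_iff]
    have : (fun z => if w ≤ z then (1:ℝ) else 0) = (Set.Ici w).indicator (fun _ => (1:ℝ)) := by
      funext z
      simp [Set.indicator, Set.mem_Ici]
    rw [this]
    exact (MeasureTheory.integrableOn_const (by
      rw [Set.uIoc]; exact measure_Ioc_lt_top.ne)).indicator measurableSet_Ici
  rw [intervalIntegral.integral_sub hint (intervalIntegrable_const),
    knight_aux, intervalIntegral.integral_const]
  simp only [smul_eq_mul, sub_zero]
  have h1 : max (v - w) 0 = if w ≤ v then v - w else 0 := by
    split_ifs with h
    · exact max_eq_left (by linarith)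
    · exact max_eq_right (by linarith)
  have h2 : max (0 - w) 0 = if w ≤ 0 then 0 - w else 0 := by
    split_ifs with h
    · exact max_eq_left (by linarith)
    · exact max_eq_right (by linarith)
  rw [h1, h2]
  simp only [sub_nonpos]
  split_ifs <;> ring
end

section
/- Let x₁,…,xₙ ∈ ℝ^p, define the empirical prediction seminorm ‖x_i'δ‖_{2,n} = (n^{-1}∑ᵢ (xᵢ'δ)²)^{1/2} and the maximal m-sparse eigenvalue φ_max(m) = max over δ with 1 ≤ ‖δ‖₀ ≤ m of δ'(n^{-1}∑ xᵢxᵢ')δ / ‖δ‖². Let β̂, β₀ ∈ ℝ^p with ‖β₀‖₀ ≤ s ≤ m. Then ‖x_i'(β̂^(2m) − β₀)‖_{2,n} ≤ ‖x_i'(β̂ − β₀)‖_{2,n} + (φ_max(m)/m)^{1/2} ‖β̂ − β₀‖₁. -/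
open Finset

lemma l2_triangle (n : ℕ) (a b : Fin n → ℝ) :
    Real.sqrt (∑ i, (a i + b i)^2) ≤ Real.sqrt (∑ i, (a i)^2) + Real.sqrt (∑ i, (b i)^2) := by
  have h := norm_add_le (E := EuclideanSpace ℝ (Fin n))
    ((WithLp.equiv 2 _).symm a) ((WithLp.equiv 2 _).symm b)
  simpa [EuclideanSpace.norm_eq, Real.norm_eq_abs, sq_abs] using h

lemma l2n_triangle (n : ℕ) (c : ℝ) (hc : 0 ≤ c) (a b : Fin n → ℝ) :
    Real.sqrt (c * ∑ i, (a i + b i)^2) ≤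
      Real.sqrt (c * ∑ i, (a i)^2) + Real.sqrt (c * ∑ i, (b i)^2) := by
  rw [Real.sqrt_mul hc, Real.sqrt_mul hc, Real.sqrt_mul hc, ← mul_add]
  exact mul_le_mul_of_nonneg_left (l2_triangle n a b) (Real.sqrt_nonneg c)

lemma l2n_triangle_sub (n : ℕ) (c : ℝ) (hc : 0 ≤ c) (a b : Fin n → ℝ) :
    Real.sqrt (c * ∑ i, (a i - b i)^2) ≤
      Real.sqrt (c * ∑ i, (a i)^2) + Real.sqrt (c * ∑ i, (b i)^2) := by
  have h := l2n_triangle n c hc a (fun i => -b i)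
  simpa [sub_eq_add_neg, neg_sq] using h

lemma exists_top (p : ℕ) (T : Finset (Fin p)) (f : Fin p → ℝ) :
    ∀ k, k ≤ T.card → ∃ U ⊆ T, U.card = k ∧ ∀ i ∈ U, ∀ j ∈ T, j ∉ U → f j ≤ f i := by
  intro k
  induction k with
  | zero => intro _; exact ⟨∅, empty_subset _, card_empty, by simp⟩
  | succ k ih =>
    intro hk
    obtain ⟨U, hUT, hUc, hUm⟩ := ih (Nat.le_of_succ_le hk)
    have hne : (T \ U).Nonempty := by
      rw [← Finset.card_pos, Finset.card_sdiff_of_subset hUT, hUc]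
      omega
    obtain ⟨j₀, hj₀, hmax⟩ := Finset.exists_max_image (T \ U) f hne
    have hj₀T : j₀ ∈ T := (Finset.mem_sdiff.mp hj₀).1
    have hj₀U : j₀ ∉ U := (Finset.mem_sdiff.mp hj₀).2
    refine ⟨insert j₀ U, ?_, ?_, ?_⟩
    · exact Finset.insert_subset hj₀T hUT
    · rw [Finset.card_insert_of_notMem hj₀U, hUc]
    · intro i hi j hjT hjU
      have hjU' : j ∉ U := fun h => hjU (Finset.mem_insert_of_mem h)
      rcases Finset.mem_insert.mp hi with rfl | hiU
      · exact hmax j (Finset.mem_sdiff.mpr ⟨hjT, hjU'⟩)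
      · exact hUm i hiU j hjT hjU'

lemma pairing_sum_le (p : ℕ) (P Q : Finset (Fin p)) (h : P.card = Q.card) (f g : Fin p → ℝ)
    (hfg : ∀ j ∈ P, ∀ i ∈ Q, f j ≤ g i) : ∑ j ∈ P, f j ≤ ∑ i ∈ Q, g i := by
  rcases P.eq_empty_or_nonempty with rfl | hP
  · have : Q = ∅ := Finset.card_eq_zero.mp (by simpa using h.symm)
    simp [this]
  · have hQ : Q.Nonempty := Finset.card_pos.mp (h ▸ Finset.card_pos.mpr hP)
    obtain ⟨i₀, hi₀Q, hi₀⟩ := Finset.exists_min_image Q g hQ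
    calc ∑ j ∈ P, f j ≤ ∑ _j ∈ P, g i₀ := Finset.sum_le_sum (fun j hj => hfg j hj i₀ hi₀Q)
      _ = Q.card • g i₀ := by rw [Finset.sum_const, h]
      _ ≤ ∑ i ∈ Q, g i := Finset.card_nsmul_le_sum Q g _ (fun i hi => hi₀ i hi)

section Shell

variable (n p m : ℕ) (hn : 0 < n) (hm : 0 < m)
    (x : Fin n → Fin p → ℝ) (φmax : ℝ) (hφ0 : 0 ≤ φmax)
    (hφ : ∀ δ : Fin p → ℝ, δ ≠ 0 → (univ.filter fun j => δ j ≠ 0).card ≤ m →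
      (1 / (n : ℝ)) * ∑ i, (∑ j, x i j * δ j) ^ 2 ≤ φmax * ∑ j, (δ j) ^ 2)

include hn hm hφ0 hφ

lemma small_bound (U : Finset (Fin p)) (hU : U.card ≤ m) (w : Fin p → ℝ) (t : ℝ) (ht : 0 ≤ t)
    (hwt : ∀ j, |w j| ≤ t) (hw0 : ∀ j ∉ U, w j = 0) :
    Real.sqrt ((1 / (n : ℝ)) * ∑ i, (∑ j, x i j * w j) ^ 2) ≤
      Real.sqrt φmax * (Real.sqrt m * t) := by
  by_cases hw : w = 0
  · subst hw
    have hz : (1 / (n : ℝ)) * ∑ _i : Fin n, ((0:ℝ)) ^ 2 = 0 := by simp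
    simp only [Pi.zero_apply, mul_zero, Finset.sum_const_zero]
    rw [show (0:ℝ)^2 = 0 by norm_num]
    simp only [Finset.sum_const_zero, mul_zero, Real.sqrt_zero]
    positivity
  · have hcard : (univ.filter fun j => w j ≠ 0).card ≤ m := by
      refine le_trans (Finset.card_le_card ?_) hU
      intro j hj
      simp only [Finset.mem_filter] at hj
      by_contra hjU
      exact hj.2 (hw0 j hjU)
    have h1 := hφ w hw hcard
    have h2 : ∑ j, (w j) ^ 2 ≤ (m : ℝ) * t ^ 2 := by
      calc ∑ j, (w j) ^ 2 = ∑ j ∈ U, (w j) ^ 2 := by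
            refine (Finset.sum_subset (Finset.subset_univ U) ?_).symm
            intro j _ hjU; rw [hw0 j hjU]; ring
        _ ≤ ∑ _j ∈ U, t ^ 2 := by
            refine Finset.sum_le_sum (fun j _ => ?_)
            rw [← sq_abs]; exact pow_le_pow_left₀ (abs_nonneg _) (hwt j) 2
        _ = (U.card : ℝ) * t ^ 2 := by rw [Finset.sum_const]; push_cast; ring
        _ ≤ (m : ℝ) * t ^ 2 := by
            apply mul_le_mul_of_nonneg_right _ (sq_nonneg t)
            exact_mod_cast hU
    calc Real.sqrt ((1 / (n : ℝ)) * ∑ i, (∑ j, x i j * w j) ^ 2)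
        ≤ Real.sqrt (φmax * ((m : ℝ) * t ^ 2)) := by
          apply Real.sqrt_le_sqrt
          exact le_trans h1 (mul_le_mul_of_nonneg_left h2 hφ0)
      _ = Real.sqrt φmax * (Real.sqrt m * t) := by
          rw [Real.sqrt_mul hφ0, Real.sqrt_mul (by positivity : (0:ℝ) ≤ (m:ℝ)),
            Real.sqrt_sq ht]

lemma shelling : ∀ (N : ℕ) (T : Finset (Fin p)) (v : Fin p → ℝ) (t : ℝ), T.card ≤ N → 0 ≤ t →
    (∀ j, |v j| ≤ t) → (∀ j ∉ T, v j = 0) →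
    Real.sqrt ((1 / (n : ℝ)) * ∑ i, (∑ j, x i j * v j) ^ 2) ≤
      Real.sqrt φmax * (Real.sqrt m * t + (∑ j ∈ T, |v j|) / Real.sqrt m) := by
  have hsm : (0:ℝ) < Real.sqrt m := Real.sqrt_pos.mpr (by positivity)
  intro N
  induction N with
  | zero =>
    intro T v t hTc ht hvt hv0
    have hT : T = ∅ := Finset.card_eq_zero.mp (Nat.le_zero.mp hTc)
    subst hT
    have : v = 0 := funext fun j => hv0 j (Finset.notMem_empty j)
    subst this
    simp only [Pi.zero_apply, mul_zero, Finset.sum_const_zero, abs_zero]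
    rw [show (0:ℝ)^2 = 0 by norm_num]
    simp only [Finset.sum_const_zero, mul_zero, Real.sqrt_zero]
    positivity
  | succ N ih =>
    intro T v t hTc ht hvt hv0
    by_cases hTm : T.card ≤ m
    · have h := small_bound n p m hn hm x φmax hφ0 hφ T hTm v t ht hvt hv0
      refine le_trans h ?_
      apply mul_le_mul_of_nonneg_left _ (Real.sqrt_nonneg φmax)
      have : 0 ≤ (∑ j ∈ T, |v j|) / Real.sqrt m := by positivity
      linarith
    · push_neg at hTm
      obtain ⟨T₁, hT₁T, hT₁c, hT₁max⟩ := exists_top p T (fun j => |v j|) m hTm.le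
      set v₁ : Fin p → ℝ := fun j => if j ∈ T₁ then v j else 0 with hv₁
      set v₂ : Fin p → ℝ := fun j => if j ∈ T₁ then 0 else v j with hv₂
      have hsplit : ∀ i, ∑ j, x i j * v j = (∑ j, x i j * v₁ j) + (∑ j, x i j * v₂ j) := by
        intro i
        rw [← Finset.sum_add_distrib]
        refine Finset.sum_congr rfl fun j _ => ?_
        by_cases hj : j ∈ T₁ <;> simp [hv₁, hv₂, hj]
      set t' : ℝ := (∑ i ∈ T₁, |v i|) / m with ht'
      have ht'0 : 0 ≤ t' := by positivity
      have hv₂t : ∀ j, |v₂ j| ≤ t' := by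
        intro j
        by_cases hj : j ∈ T₁
        · simp [hv₂, hj, ht'0]
        · simp only [hv₂, hj, if_false]
          by_cases hjT : j ∈ T
          · have hb : ∀ i ∈ T₁, |v j| ≤ |v i| := fun i hi => hT₁max i hi j hjT hj
            have : (T₁.card : ℝ) * |v j| ≤ ∑ i ∈ T₁, |v i| := by
              calc (T₁.card : ℝ) * |v j| = ∑ _i ∈ T₁, |v j| := by
                    rw [Finset.sum_const]; push_cast; ring
                _ ≤ ∑ i ∈ T₁, |v i| := Finset.sum_le_sum hb
            rw [ht', le_div_iff₀ (by positivity : (0:ℝ) < (m:ℝ))]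
            rw [hT₁c] at this; linarith
          · rw [hv0 j hjT]; simpa using ht'0
      have hv₂0 : ∀ j ∉ T \ T₁, v₂ j = 0 := by
        intro j hj
        by_cases hjT₁ : j ∈ T₁
        · simp [hv₂, hjT₁]
        · have : j ∉ T := fun h => hj (Finset.mem_sdiff.mpr ⟨h, hjT₁⟩)
          simp [hv₂, hjT₁, hv0 j this]
      have hcard2 : (T \ T₁).card ≤ N := by
        rw [Finset.card_sdiff_of_subset hT₁T, hT₁c]; omega
      have h2 := ih (T \ T₁) v₂ t' hcard2 ht'0 hv₂t hv₂0
      have hv₁t : ∀ j, |v₁ j| ≤ t := by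
        intro j; by_cases hj : j ∈ T₁ <;> simp [hv₁, hj, ht, hvt j]
      have hv₁0 : ∀ j ∉ T₁, v₁ j = 0 := fun j hj => by simp [hv₁, hj]
      have h1 := small_bound n p m hn hm x φmax hφ0 hφ T₁ hT₁c.le v₁ t ht hv₁t hv₁0
      have htri : Real.sqrt ((1 / (n : ℝ)) * ∑ i, (∑ j, x i j * v j) ^ 2) ≤
          Real.sqrt ((1 / (n : ℝ)) * ∑ i, (∑ j, x i j * v₁ j) ^ 2) +
          Real.sqrt ((1 / (n : ℝ)) * ∑ i, (∑ j, x i j * v₂ j) ^ 2) := by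
        have := l2n_triangle n (1 / (n : ℝ)) (by positivity)
          (fun i => ∑ j, x i j * v₁ j) (fun i => ∑ j, x i j * v₂ j)
        simp only [← hsplit] at this
        exact this
      have key : Real.sqrt m * t' = (∑ i ∈ T₁, |v i|) / Real.sqrt m := by
        have hmm : Real.sqrt m * Real.sqrt m = (m : ℝ) :=
          Real.mul_self_sqrt (by positivity)
        rw [ht', eq_div_iff hsm.ne']
        field_simp
        linear_combination (∑ i ∈ T₁, |v i|) * hmm
      have hsum : ∑ j ∈ T \ T₁, |v₂ j| = ∑ j ∈ T \ T₁, |v j| := by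
        refine Finset.sum_congr rfl fun j hj => ?_
        have : j ∉ T₁ := (Finset.mem_sdiff.mp hj).2
        simp [hv₂, this]
      have hsdiff : ∑ j ∈ T \ T₁, |v j| + ∑ j ∈ T₁, |v j| = ∑ j ∈ T, |v j| :=
        Finset.sum_sdiff hT₁T
      calc Real.sqrt ((1 / (n : ℝ)) * ∑ i, (∑ j, x i j * v j) ^ 2)
          ≤ Real.sqrt φmax * (Real.sqrt m * t) +
            Real.sqrt φmax * (Real.sqrt m * t' + (∑ j ∈ T \ T₁, |v₂ j|) / Real.sqrt m) :=
            le_trans htri (add_le_add h1 h2)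
        _ = Real.sqrt φmax * (Real.sqrt m * t + (∑ j ∈ T, |v j|) / Real.sqrt m) := by
            rw [hsum, key, ← hsdiff]
            rw [add_div]
            ring

end Shell


/-- Prediction-norm bound for the `2m`-truncation.  With
`‖x_i'δ‖_{2,n} = (n⁻¹ ∑ᵢ (xᵢ'δ)²)^{1/2}` and `φ_max(m)` the maximal `m`-sparse eigenvalue of the
empirical Gram matrix (here: any upper bound `φmax` on the `m`-sparse Rayleigh quotients), if
`‖β₀‖₀ ≤ s ≤ m` and `β̂^(2m)` keeps the `2m` largest components of `β̂` (encoded by a set `S`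
of `2m` indices carrying the largest components), then
`‖x_i'(β̂^(2m) − β₀)‖_{2,n} ≤ ‖x_i'(β̂ − β₀)‖_{2,n} + (φ_max(m)/m)^{1/2} ‖β̂ − β₀‖₁`. -/
theorem trunc_prediction_norm_bound (n p s m : ℕ) (hn : 0 < n) (hm : 0 < m) (hsm : s ≤ m)
    (x : Fin n → Fin p → ℝ) (βhat β₀ : Fin p → ℝ)
    (hβ₀ : (univ.filter fun j => β₀ j ≠ 0).card ≤ s)
    (φmax : ℝ)
    (hφ : ∀ δ : Fin p → ℝ, δ ≠ 0 → (univ.filter fun j => δ j ≠ 0).card ≤ m →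
      (1 / (n : ℝ)) * ∑ i, (∑ j, x i j * δ j) ^ 2 ≤ φmax * ∑ j, (δ j) ^ 2)
    (S : Finset (Fin p)) (hScard : S.card = 2 * m)
    (hS : ∀ i ∈ S, ∀ j ∉ S, |βhat j| ≤ |βhat i|) :
    Real.sqrt ((1 / (n : ℝ)) * ∑ i, (∑ j, x i j * ((if j ∈ S then βhat j else 0) - β₀ j)) ^ 2) ≤
      Real.sqrt ((1 / (n : ℝ)) * ∑ i, (∑ j, x i j * (βhat j - β₀ j)) ^ 2) +
        Real.sqrt (φmax / m) * ∑ j, |βhat j - β₀ j| := by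
  -- p is positive since S has 2m ≥ 2 elements
  have hp : 0 < p := by
    have := Finset.card_le_card (Finset.subset_univ S)
    rw [hScard, Finset.card_univ, Fintype.card_fin] at this
    omega
  -- φmax is nonnegative
  have hφ0 : 0 ≤ φmax := by
    set e : Fin p → ℝ := fun j => if j = ⟨0, hp⟩ then 1 else 0 with he
    have h1 : e ≠ 0 := by
      intro h
      have := congrFun h ⟨0, hp⟩
      simp [he] at this
    have h2 : (univ.filter fun j => e j ≠ 0).card ≤ m := by
      have : (univ.filter fun j => e j ≠ 0) = {(⟨0, hp⟩ : Fin p)} := by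
        ext j; simp [he]
      rw [this]; simpa using Nat.one_le_iff_ne_zero.mpr hm.ne'
    have h3 := hφ e h1 h2
    have h4 : ∑ j, (e j) ^ 2 = 1 := by simp [he]
    rw [h4, mul_one] at h3
    have h5 : (0:ℝ) ≤ (1 / (n : ℝ)) * ∑ i, (∑ j, x i j * e j) ^ 2 := by positivity
    linarith
  have hsm' : (0:ℝ) < Real.sqrt m := Real.sqrt_pos.mpr (by positivity)
  have hmm : Real.sqrt m * Real.sqrt m = (m : ℝ) := Real.mul_self_sqrt (by positivity)
  set A : Finset (Fin p) := univ.filter (fun j => β₀ j ≠ 0) with hA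
  have hAnot : ∀ j, j ∉ A → β₀ j = 0 := by
    intro j hj
    by_contra h
    exact hj (Finset.mem_filter.mpr ⟨Finset.mem_univ j, h⟩)
  have hAc : A.card ≤ m := le_trans hβ₀ hsm
  -- choose W ⊆ S \ A with card m + (A\S).card
  have hle : m + (A \ S).card ≤ (S \ A).card := by
    have e1 : (S \ A).card + (S ∩ A).card = S.card := Finset.card_sdiff_add_card_inter S A
    have e2 : (A \ S).card + (A ∩ S).card = A.card := Finset.card_sdiff_add_card_inter A S
    have e3 : (S ∩ A).card = (A ∩ S).card := by rw [Finset.inter_comm]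
    omega
  obtain ⟨W, hWS, hWc⟩ := Finset.exists_subset_card_eq (s := S \ A) (n := m + (A \ S).card) hle
  obtain ⟨W₁, hW₁W, hW₁c⟩ := Finset.exists_subset_card_eq (s := W) (n := m) (by omega)
  set W₂ : Finset (Fin p) := W \ W₁ with hW₂
  have hW₂c : W₂.card = (A \ S).card := by
    rw [hW₂, Finset.card_sdiff_of_subset hW₁W, hWc, hW₁c]; omega
  have hWSA : ∀ j ∈ W, j ∈ S ∧ j ∉ A := by
    intro j hj; exact Finset.mem_sdiff.mp (hWS hj)
  -- the truncation residual δ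
  set δ : Fin p → ℝ := fun j => if j ∈ S then 0 else βhat j with hδ
  set T : Finset (Fin p) := univ.filter (fun j => j ∉ S) with hT
  set t : ℝ := (∑ i ∈ W₁, |βhat i|) / m with htdef
  have ht0 : 0 ≤ t := by positivity
  -- every entry outside S is below t
  have hout : ∀ j, j ∉ S → |βhat j| ≤ t := by
    intro j hj
    have hb : ∀ i ∈ W₁, |βhat j| ≤ |βhat i| := by
      intro i hi
      exact hS i (hWSA i (hW₁W hi)).1 j hj
    have : (m : ℝ) * |βhat j| ≤ ∑ i ∈ W₁, |βhat i| := by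
      calc (m : ℝ) * |βhat j| = ∑ _i ∈ W₁, |βhat j| := by
            rw [Finset.sum_const, hW₁c]; simp [nsmul_eq_mul]
        _ ≤ ∑ i ∈ W₁, |βhat i| := Finset.sum_le_sum hb
    rw [htdef, le_div_iff₀ (by positivity : (0:ℝ) < (m:ℝ))]
    linarith
  have hδt : ∀ j, |δ j| ≤ t := by
    intro j
    by_cases hj : j ∈ S
    · simp [hδ, hj, ht0]
    · simp only [hδ, hj, if_false]; exact hout j hj
  have hδ0 : ∀ j ∉ T, δ j = 0 := by
    intro j hj
    have : j ∈ S := by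
      by_contra h
      exact hj (Finset.mem_filter.mpr ⟨Finset.mem_univ j, h⟩)
    simp [hδ, this]
  -- shelling bound on δ
  have hshell := shelling n p m hn hm x φmax hφ0 hφ T.card T δ t le_rfl ht0 hδt hδ0
  -- triangle inequality
  have hpoint : ∀ i, ∑ j, x i j * ((if j ∈ S then βhat j else 0) - β₀ j)
      = (∑ j, x i j * (βhat j - β₀ j)) - (∑ j, x i j * δ j) := by
    intro i
    rw [← Finset.sum_sub_distrib]
    refine Finset.sum_congr rfl fun j _ => ?_
    by_cases hj : j ∈ S <;> simp [hδ, hj] <;> ring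
  have htri : Real.sqrt ((1 / (n : ℝ)) *
        ∑ i, (∑ j, x i j * ((if j ∈ S then βhat j else 0) - β₀ j)) ^ 2) ≤
      Real.sqrt ((1 / (n : ℝ)) * ∑ i, (∑ j, x i j * (βhat j - β₀ j)) ^ 2) +
      Real.sqrt ((1 / (n : ℝ)) * ∑ i, (∑ j, x i j * δ j) ^ 2) := by
    have h := l2n_triangle_sub n (1 / (n : ℝ)) (by positivity)
      (fun i => ∑ j, x i j * (βhat j - β₀ j)) (fun i => ∑ j, x i j * δ j)
    refine le_trans (le_of_eq ?_) h
    congr 1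
    refine congrArg _ (Finset.sum_congr rfl fun i _ => ?_)
    rw [hpoint i]
  -- counting inequality
  have hTA : A \ S ⊆ T := by
    intro j hj
    exact Finset.mem_filter.mpr ⟨Finset.mem_univ j, (Finset.mem_sdiff.mp hj).2⟩
  have hTsplit : ∑ j ∈ T \ (A \ S), |βhat j| + ∑ j ∈ A \ S, |βhat j| = ∑ j ∈ T, |βhat j| :=
    Finset.sum_sdiff hTA
  have hW₂W : W₂ ⊆ W := Finset.sdiff_subset
  have hpair : ∑ j ∈ A \ S, |βhat j| ≤ ∑ i ∈ W₂, |βhat i| := by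
    refine pairing_sum_le p (A \ S) W₂ hW₂c.symm _ _ fun j hj i hi => ?_
    exact hS i (hWSA i (hW₂W hi)).1 j (Finset.mem_sdiff.mp hj).2
  have habs : ∀ j, j ∉ A → |βhat j| = |βhat j - β₀ j| := fun j hj => by
    rw [hAnot j hj, sub_zero]
  have hd1 : Disjoint W₁ W₂ := Finset.disjoint_sdiff
  have hd2 : Disjoint (W₁ ∪ W₂) (T \ (A \ S)) := by
    rw [Finset.disjoint_left]
    intro j hj hj'
    have hjW : j ∈ W := by
      rcases Finset.mem_union.mp hj with h | h
      · exact hW₁W h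
      · exact hW₂W h
    have hjS : j ∈ S := (hWSA j hjW).1
    have hjT : j ∈ T := (Finset.mem_sdiff.mp hj').1
    exact (Finset.mem_filter.mp hjT).2 hjS
  have e1 : ∑ j ∈ W₁, |βhat j| = ∑ j ∈ W₁, |βhat j - β₀ j| :=
    Finset.sum_congr rfl fun j hj => habs j (hWSA j (hW₁W hj)).2
  have e2 : ∑ j ∈ W₂, |βhat j| = ∑ j ∈ W₂, |βhat j - β₀ j| :=
    Finset.sum_congr rfl fun j hj => habs j (hWSA j (hW₂W hj)).2
  have e3 : ∑ j ∈ T \ (A \ S), |βhat j| = ∑ j ∈ T \ (A \ S), |βhat j - β₀ j| := by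
    refine Finset.sum_congr rfl fun j hj => habs j ?_
    obtain ⟨hjT, hjAS⟩ := Finset.mem_sdiff.mp hj
    have hjS : j ∉ S := (Finset.mem_filter.mp hjT).2
    intro hjA
    exact hjAS (Finset.mem_sdiff.mpr ⟨hjA, hjS⟩)
  have hunion : ∑ j ∈ (W₁ ∪ W₂) ∪ (T \ (A \ S)), |βhat j - β₀ j| =
      ∑ j ∈ W₁, |βhat j - β₀ j| + ∑ j ∈ W₂, |βhat j - β₀ j|
        + ∑ j ∈ T \ (A \ S), |βhat j - β₀ j| := by
    rw [Finset.sum_union hd2, Finset.sum_union hd1]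
  have hsub : ∑ j ∈ (W₁ ∪ W₂) ∪ (T \ (A \ S)), |βhat j - β₀ j| ≤ ∑ j, |βhat j - β₀ j| :=
    Finset.sum_le_sum_of_subset_of_nonneg (Finset.subset_univ _)
      (fun j _ _ => abs_nonneg _)
  have hcount : ∑ i ∈ W₁, |βhat i| + ∑ j ∈ T, |βhat j| ≤ ∑ j, |βhat j - β₀ j| := by
    have hsub' : ∑ j ∈ W₁, |βhat j - β₀ j| + ∑ j ∈ W₂, |βhat j - β₀ j|
        + ∑ j ∈ T \ (A \ S), |βhat j - β₀ j| ≤ ∑ j, |βhat j - β₀ j| := hunion ▸ hsub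
    rw [← hTsplit, e1, e3]
    rw [e2] at hpair
    linarith
  -- assemble
  have hδsum : ∑ j ∈ T, |δ j| = ∑ j ∈ T, |βhat j| := by
    refine Finset.sum_congr rfl fun j hj => ?_
    have : j ∉ S := (Finset.mem_filter.mp hj).2
    simp [hδ, this]
  have hmt : Real.sqrt m * t = (∑ i ∈ W₁, |βhat i|) / Real.sqrt m := by
    rw [htdef, eq_div_iff hsm'.ne']
    field_simp
    linear_combination (∑ i ∈ W₁, |βhat i|) * hmm
  have hfin : Real.sqrt φmax * (Real.sqrt m * t + (∑ j ∈ T, |δ j|) / Real.sqrt m) ≤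
      Real.sqrt (φmax / m) * ∑ j, |βhat j - β₀ j| := by
    rw [hδsum, hmt, ← add_div, Real.sqrt_div hφ0, div_mul_eq_mul_div,
      mul_div_assoc]
    apply mul_le_mul_of_nonneg_left _ (Real.sqrt_nonneg φmax)
    have : (∑ i ∈ W₁, |βhat i| + ∑ j ∈ T, |βhat j|) / Real.sqrt m ≤
        (∑ j, |βhat j - β₀ j|) / Real.sqrt m := by gcongr
    exact this
  calc Real.sqrt ((1 / (n : ℝ)) *
        ∑ i, (∑ j, x i j * ((if j ∈ S then βhat j else 0) - β₀ j)) ^ 2)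
      ≤ Real.sqrt ((1 / (n : ℝ)) * ∑ i, (∑ j, x i j * (βhat j - β₀ j)) ^ 2) +
        Real.sqrt ((1 / (n : ℝ)) * ∑ i, (∑ j, x i j * δ j) ^ 2) := htri
    _ ≤ Real.sqrt ((1 / (n : ℝ)) * ∑ i, (∑ j, x i j * (βhat j - β₀ j)) ^ 2) +
        Real.sqrt (φmax / m) * ∑ j, |βhat j - β₀ j| :=
      add_le_add_right (le_trans hshell hfin) _
end

section
/- For any positive semidefinite p×p matrix M, any integer k ≥ 1 and any real ℓ ≥ 1, the maximal sparse eigenvalue satisfies φ_max(⌈ℓk⌉)(M) ≤ ⌈ℓ⌉ · φ_max(k)(M), where φ_max(m)(M) = max over δ with 1 ≤ ‖δ‖₀ ≤ m, ‖δ‖ = 1 of δ'Mδ. -/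
open Finset Matrix

/-- Sub-linearity of maximal sparse eigenvalues: for a positive semidefinite `p × p` matrix `M`,
integer `k ≥ 1` and real `ℓ ≥ 1`,
`φ_max(⌈ℓk⌉)(M) ≤ ⌈ℓ⌉ · φ_max(k)(M)`, where
`φ_max(m)(M) = sup { δ'Mδ : 1 ≤ ‖δ‖₀ ≤ m, ‖δ‖ = 1 }`. -/
theorem sparse_eigenvalue_sublinear (p : ℕ) (M : Matrix (Fin p) (Fin p) ℝ)
    (hM : M.PosSemidef) (k : ℕ) (hk : 1 ≤ k) (ℓ : ℝ) (hℓ : 1 ≤ ℓ) :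
    (fun m : ℕ => sSup {r : ℝ | ∃ δ : Fin p → ℝ,
        1 ≤ (univ.filter fun j => δ j ≠ 0).card ∧
        (univ.filter fun j => δ j ≠ 0).card ≤ m ∧
        (∑ j, (δ j) ^ 2) = 1 ∧ r = δ ⬝ᵥ M.mulVec δ}) (Nat.ceil (ℓ * k)) ≤
      (Nat.ceil ℓ : ℝ) *
      (fun m : ℕ => sSup {r : ℝ | ∃ δ : Fin p → ℝ,
        1 ≤ (univ.filter fun j => δ j ≠ 0).card ∧
        (univ.filter fun j => δ j ≠ 0).card ≤ m ∧
        (∑ j, (δ j) ^ 2) = 1 ∧ r = δ ⬝ᵥ M.mulVec δ}) k := by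
  have hk0 : 0 < k := hk
  set n := Nat.ceil ℓ with hn
  obtain ⟨A, hApsd, hAA⟩ : ∃ A : Matrix (Fin p) (Fin p) ℝ, A.PosSemidef ∧ A * A = M := by
    open scoped MatrixOrder in
    exact ⟨CFC.sqrt M, Matrix.nonneg_iff_posSemidef.mp (CFC.sqrt_nonneg M),
      CFC.sqrt_mul_sqrt_self M hM.nonneg⟩
  have hAsymm : Aᵀ = A := hApsd.1
  -- quadratic form via square root
  have hquad : ∀ v : Fin p → ℝ, v ⬝ᵥ M.mulVec v = ∑ j, (A.mulVec v j) ^ 2 := by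
    intro v
    have hvm : v ᵥ* A = A *ᵥ v := by rw [← Matrix.vecMul_transpose, hAsymm]
    conv_lhs => rw [← hAA, ← Matrix.mulVec_mulVec, dotProduct_mulVec, hvm]
    simp [dotProduct, sq]
  set S : Set ℝ := {r : ℝ | ∃ δ : Fin p → ℝ,
        1 ≤ (univ.filter fun j => δ j ≠ 0).card ∧
        (univ.filter fun j => δ j ≠ 0).card ≤ k ∧
        (∑ j, (δ j) ^ 2) = 1 ∧ r = δ ⬝ᵥ M.mulVec δ} with hS
  set φ : ℝ := sSup S with hφ
  have hBdd : BddAbove S := by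
    refine ⟨∑ i, ∑ j, |M i j|, fun r hr => ?_⟩
    obtain ⟨δ, -, -, h3, rfl⟩ := hr
    have habs : ∀ i, |δ i| ≤ 1 := by
      intro i
      have h1 : (δ i) ^ 2 ≤ 1 := by
        rw [← h3]
        exact Finset.single_le_sum (fun j _ => sq_nonneg (δ j)) (mem_univ i)
      nlinarith [abs_nonneg (δ i), sq_abs (δ i)]
    have : δ ⬝ᵥ M.mulVec δ = ∑ i, ∑ j, δ i * (M i j * δ j) := by
      simp [dotProduct, Matrix.mulVec, Finset.mul_sum]
    rw [this]
    refine Finset.sum_le_sum fun i _ => Finset.sum_le_sum fun j _ => ?_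
    calc δ i * (M i j * δ j) ≤ |δ i * (M i j * δ j)| := le_abs_self _
      _ = |δ i| * (|M i j| * |δ j|) := by rw [abs_mul, abs_mul]
      _ ≤ 1 * (|M i j| * 1) := by
          refine mul_le_mul (habs i) (mul_le_mul_of_nonneg_left (habs j) (abs_nonneg _))
            (by positivity) zero_le_one
      _ = |M i j| := by ring
  have hφ0 : 0 ≤ φ := by
    rcases Set.eq_empty_or_nonempty S with hE | ⟨r, hr⟩
    · rw [hφ, hE, Real.sSup_empty]
    · refine le_trans ?_ (le_csSup hBdd hr)
      obtain ⟨δ, -, -, -, rfl⟩ := hr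
      simpa using hM.dotProduct_mulVec_nonneg δ
  -- key bound for k-sparse vectors, not normalized
  have key : ∀ v : Fin p → ℝ, (univ.filter fun j => v j ≠ 0).card ≤ k →
      v ⬝ᵥ M.mulVec v ≤ (∑ j, (v j) ^ 2) * φ := by
    intro v hv
    by_cases hv0 : v = 0
    · simp [hv0]
    · have hex : ∃ j, v j ≠ 0 := by
        by_contra h
        push_neg at h
        exact hv0 (funext h)
      obtain ⟨j0, hj0⟩ := hex
      set c : ℝ := ∑ j, (v j) ^ 2 with hc
      have hcpos : 0 < c := by
        refine Finset.sum_pos' (fun j _ => sq_nonneg _) ⟨j0, mem_univ j0, by positivity⟩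
      set w : Fin p → ℝ := fun j => (Real.sqrt c)⁻¹ * v j with hw
      have hsc : 0 < Real.sqrt c := Real.sqrt_pos.mpr hcpos
      have hwsupp : (univ.filter fun j => w j ≠ 0) = (univ.filter fun j => v j ≠ 0) := by
        refine Finset.filter_congr fun j _ => ?_
        simp [hw, mul_eq_zero, hsc.ne', inv_eq_zero]
      have hwnorm : (∑ j, (w j) ^ 2) = 1 := by
        simp only [hw, mul_pow, ← Finset.mul_sum, ← hc]
        rw [← Real.sqrt_inv, Real.sq_sqrt (by positivity)]
        field_simp
      have hmem : (w ⬝ᵥ M.mulVec w) ∈ S := by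
        refine ⟨w, ?_, ?_, hwnorm, rfl⟩
        · rw [hwsupp]
          exact Finset.card_pos.mpr ⟨j0, by simp [hj0]⟩
        · rw [hwsupp]; exact hv
      have hle : w ⬝ᵥ M.mulVec w ≤ φ := le_csSup hBdd hmem
      have hrel : w ⬝ᵥ M.mulVec w = c⁻¹ * (v ⬝ᵥ M.mulVec v) := by
        rw [hquad, hquad]
        have : A.mulVec w = fun j => (Real.sqrt c)⁻¹ * A.mulVec v j := by
          funext j
          simp only [hw, Matrix.mulVec, dotProduct, Finset.mul_sum]
          exact Finset.sum_congr rfl fun i _ => by ring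
        rw [this]
        simp only [mul_pow, ← Finset.mul_sum]
        congr 1
        rw [← Real.sqrt_inv, Real.sq_sqrt (by positivity)]
      rw [hrel] at hle
      calc v ⬝ᵥ M.mulVec v = c * (c⁻¹ * (v ⬝ᵥ M.mulVec v)) := by field_simp
        _ ≤ c * φ := mul_le_mul_of_nonneg_left hle hcpos.le
  -- main bound
  show sSup _ ≤ (n : ℝ) * φ
  refine Real.sSup_le (fun r hr => ?_) (by positivity)
  obtain ⟨δ, h1, h2, h3, rfl⟩ := hr
  set T : Finset (Fin p) := univ.filter fun j => δ j ≠ 0 with hT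
  set L : List (Fin p) := T.sort (· ≤ ·) with hL
  have hLmem : ∀ j, j ∈ L ↔ j ∈ T := fun j => Finset.mem_sort _
  have hLlen : L.length = T.card := Finset.length_sort _
  have hn1 : 1 ≤ n := Nat.one_le_ceil_iff.mpr (by linarith)
  have hTk : T.card ≤ n * k := by
    refine le_trans h2 ?_
    rw [Nat.ceil_le]
    push_cast
    exact mul_le_mul_of_nonneg_right (Nat.le_ceil ℓ) (by positivity)
  -- the decomposition
  set d : ℕ → Fin p → ℝ := fun i j => if j ∈ T ∧ L.idxOf j / k = i then δ j else 0 with hd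
  have hidx : ∀ j ∈ T, L.idxOf j / k < n := by
    intro j hj
    have hjL : j ∈ L := (hLmem j).mpr hj
    have : L.idxOf j < n * k := by
      calc L.idxOf j < L.length := List.idxOf_lt_length_iff.mpr hjL
        _ = T.card := hLlen
        _ ≤ n * k := hTk
    exact Nat.div_lt_of_lt_mul (by rwa [mul_comm])
  have hsum : ∀ (f : ℝ → ℝ), f 0 = 0 → ∀ j, ∑ i ∈ range n, f (d i j) = f (δ j) := by
    intro f hf0 j
    by_cases hj : j ∈ T
    · refine Finset.sum_eq_single_of_mem (L.idxOf j / k) (mem_range.mpr (hidx j hj)) ?_ |>.trans ?_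
      · intro i _ hi
        simp only [hd, hj, true_and]
        rw [if_neg (fun h => hi h.symm), hf0]
      · simp only [hd, hj, true_and, if_pos rfl, if_true]
    · have hδj : δ j = 0 := by
        by_contra h
        exact hj (by simp [hT, h])
      have : ∀ i, d i j = 0 := by
        intro i
        rw [hd]
        simp [hj]
      simp [this, hf0, hδj]
  have hsum1 : ∀ j, ∑ i ∈ range n, d i j = δ j := fun j => by
    simpa using hsum (fun x => x) rfl j
  have hsum2 : ∀ j, ∑ i ∈ range n, (d i j) ^ 2 = (δ j) ^ 2 := fun j => by
    simpa using hsum (fun x => x ^ 2) (by norm_num) j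
  have hcard : ∀ i, (univ.filter fun j => d i j ≠ 0).card ≤ k := by
    intro i
    have hsub : (univ.filter fun j => d i j ≠ 0) ⊆
        univ.filter fun j => j ∈ T ∧ L.idxOf j / k = i := by
      intro j hj
      simp only [mem_filter, mem_univ, true_and] at hj ⊢
      by_contra h
      exact hj (if_neg h)
    refine le_trans (Finset.card_le_card hsub) ?_
    have hinj : ∀ j1 ∈ (univ.filter fun j => j ∈ T ∧ L.idxOf j / k = i),
        ∀ j2 ∈ (univ.filter fun j => j ∈ T ∧ L.idxOf j / k = i),
        L.idxOf j1 = L.idxOf j2 → j1 = j2 := by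
      intro j1 hj1 j2 hj2 heq
      simp only [mem_filter, mem_univ, true_and] at hj1 hj2
      exact (List.idxOf_inj ((hLmem j1).mpr hj1.1)).mp heq
    have hmaps : ∀ j ∈ (univ.filter fun j => j ∈ T ∧ L.idxOf j / k = i),
        L.idxOf j ∈ Finset.Ico (i * k) (i * k + k) := by
      intro j hj
      simp only [mem_filter, mem_univ, true_and] at hj
      rw [Finset.mem_Ico]
      constructor
      · exact (Nat.le_div_iff_mul_le hk0).mp (hj.2.ge)
      · have : L.idxOf j / k < i + 1 := by omega
        calc L.idxOf j < (i + 1) * k := (Nat.div_lt_iff_lt_mul hk0).mp this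
          _ = i * k + k := by ring
    calc (univ.filter fun j => j ∈ T ∧ L.idxOf j / k = i).card
        ≤ (Finset.Ico (i * k) (i * k + k)).card :=
          Finset.card_le_card_of_injOn _ hmaps hinj
      _ = k := by rw [Nat.card_Ico]; omega
  -- the vectors after applying A
  set w : ℕ → Fin p → ℝ := fun i => A.mulVec (d i) with hw
  set q : ℕ → ℝ := fun i => ∑ j, (w i j) ^ 2 with hq
  have hq0 : ∀ i, 0 ≤ q i := fun i => Finset.sum_nonneg fun j _ => sq_nonneg _
  have hqd : ∀ i, d i ⬝ᵥ M.mulVec (d i) = q i := fun i => hquad (d i)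
  have hAδ : ∀ j, A.mulVec δ j = ∑ i ∈ range n, w i j := by
    intro j
    simp only [hw, Matrix.mulVec, dotProduct]
    rw [Finset.sum_comm]
    refine Finset.sum_congr rfl fun l _ => ?_
    rw [← Finset.mul_sum, hsum1 l]
  -- pairwise Cauchy-Schwarz
  have hCS : ∀ i i', ∑ j, w i j * w i' j ≤ Real.sqrt (q i) * Real.sqrt (q i') := by
    intro i i'
    have h := Finset.sum_mul_sq_le_sq_mul_sq univ (fun j => w i j) (fun j => w i' j)
    calc ∑ j, w i j * w i' j ≤ |∑ j, w i j * w i' j| := le_abs_self _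
      _ = Real.sqrt ((∑ j, w i j * w i' j) ^ 2) := (Real.sqrt_sq_eq_abs _).symm
      _ ≤ Real.sqrt (q i * q i') := Real.sqrt_le_sqrt (by simpa [hq, sq] using h)
      _ = Real.sqrt (q i) * Real.sqrt (q i') := Real.sqrt_mul (hq0 i) _
  have step1 : δ ⬝ᵥ M.mulVec δ ≤ (∑ i ∈ range n, Real.sqrt (q i)) ^ 2 := by
    rw [hquad]
    have : ∑ j, (A.mulVec δ j) ^ 2 = ∑ i ∈ range n, ∑ i' ∈ range n, ∑ j, w i j * w i' j := by
      simp only [hAδ, sq, Finset.sum_mul_sum]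
      rw [Finset.sum_comm]
      exact Finset.sum_congr rfl fun i _ => Finset.sum_comm
    rw [this, sq, Finset.sum_mul_sum]
    exact Finset.sum_le_sum fun i _ => Finset.sum_le_sum fun i' _ => hCS i i'
  have step2 : (∑ i ∈ range n, Real.sqrt (q i)) ^ 2 ≤ (n : ℝ) * ∑ i ∈ range n, q i := by
    have h := Finset.sum_mul_sq_le_sq_mul_sq (range n) (fun _ => (1 : ℝ))
      (fun i => Real.sqrt (q i))
    simpa [Finset.card_range, Real.sq_sqrt, hq0, sq] using h
  have step3 : ∑ i ∈ range n, q i ≤ φ := by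
    have : ∑ i ∈ range n, q i ≤ ∑ i ∈ range n, (∑ j, (d i j) ^ 2) * φ := by
      refine Finset.sum_le_sum fun i _ => ?_
      rw [← hqd]
      exact key (d i) (hcard i)
    refine le_trans this ?_
    rw [← Finset.sum_mul]
    have : ∑ i ∈ range n, ∑ j, (d i j) ^ 2 = 1 := by
      rw [Finset.sum_comm]
      rw [← h3]
      exact Finset.sum_congr rfl fun j _ => hsum2 j
    rw [this, one_mul]
  calc δ ⬝ᵥ M.mulVec δ ≤ (∑ i ∈ range n, Real.sqrt (q i)) ^ 2 := step1
    _ ≤ (n : ℝ) * ∑ i ∈ range n, q i := step2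
    _ ≤ (n : ℝ) * φ := mul_le_mul_of_nonneg_left step3 (by positivity)
end

section
/- In the setting of the ℓ₁-penalized quantile regression with penalty λ_u, suppose the regularization event λ_u/n ≥ c‖E_n[(u − 1{ỹ_i ≤ x̃_i'η_u + r_{ui}})x̃_i]‖_∞ holds with c > 1, and the remainder R̂(η) := E_n[ρ_u(ỹ−x̃'η)] − E_n[ρ_u(ỹ−x̃'η_u−r_u)] − E_n[(u−1{ỹ≤x̃'η_u+r_u})(x̃'η−x̃'η_u−r_u)] is nonnegative. If δ̃ = η̃ − η_u satisfies E_n[ρ_u(ỹ−x̃'η̃)] − E_n[ρ_u(ỹ−x̃'η_u)] ≤ (λ_u/n)(‖η_u‖₁ − ‖η̃‖₁), then with c̄ = (c+1)/(c−1), ‖δ̃_{T_u^c}‖₁ ≤ c̄‖δ̃_{T_u}‖₁ + (nc/(λ_u(c−1)))R̂(η_u), where T_u = supp(η_u). -/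
open Finset

/-- The quantile check function `ρ_u(t) = t(u − 1{t ≤ 0})`. -/
noncomputable def rhoCheck (u t : ℝ) : ℝ := t * (u - if t ≤ 0 then 1 else 0)

/-- The Knight-identity remainder of the empirical quantile regression objective at `η`:
`R̂(η) = E_n[ρ_u(ỹ−x̃'η)] − E_n[ρ_u(ỹ−x̃'η_u−r_u)] − E_n[(u−1{ỹ≤x̃'η_u+r_u})(x̃'η−x̃'η_u−r_u)]`. -/
noncomputable def RhatQR (n p : ℕ) (u : ℝ) (x : Fin n → Fin p → ℝ) (ytil : Fin n → ℝ)
    (ηu : Fin p → ℝ) (r : Fin n → ℝ) (η : Fin p → ℝ) : ℝ :=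
  (1 / (n : ℝ)) * ∑ i, rhoCheck u (ytil i - ∑ j, x i j * η j) -
    (1 / (n : ℝ)) * ∑ i, rhoCheck u (ytil i - (∑ j, x i j * ηu j) - r i) -
    (1 / (n : ℝ)) * ∑ i,
      (u - if ytil i ≤ (∑ j, x i j * ηu j) + r i then 1 else 0) *
        ((∑ j, x i j * η j) - (∑ j, x i j * ηu j) - r i)

lemma sum_swap_helper (n p : ℕ) (W R : Fin n → ℝ) (b : Fin n → Fin p → ℝ)
    (t uu : Fin p → ℝ) :
    ∑ j, ((1 / (n : ℝ)) * ∑ i, W i * b i j) * (t j - uu j)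
      = (1 / (n : ℝ)) * ∑ i, W i * ((∑ j, b i j * t j) - (∑ j, b i j * uu j) - R i)
        - (1 / (n : ℝ)) * ∑ i, W i * ((∑ j, b i j * uu j) - (∑ j, b i j * uu j) - R i) := by
  rw [← mul_sub, ← Finset.sum_sub_distrib]
  have h1 : ∀ i ∈ (univ : Finset (Fin n)),
      W i * ((∑ j, b i j * t j) - (∑ j, b i j * uu j) - R i)
        - W i * ((∑ j, b i j * uu j) - (∑ j, b i j * uu j) - R i)
      = ∑ j, W i * (b i j * (t j - uu j)) := by
    intro i _
    have h2 : (∑ j, b i j * t j) - (∑ j, b i j * uu j) = ∑ j, b i j * (t j - uu j) := by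
      rw [← Finset.sum_sub_distrib]
      exact Finset.sum_congr rfl fun j _ => by ring
    calc W i * ((∑ j, b i j * t j) - (∑ j, b i j * uu j) - R i)
          - W i * ((∑ j, b i j * uu j) - (∑ j, b i j * uu j) - R i)
        = W i * ((∑ j, b i j * t j) - (∑ j, b i j * uu j)) := by ring
      _ = W i * ∑ j, b i j * (t j - uu j) := by rw [h2]
      _ = ∑ j, W i * (b i j * (t j - uu j)) := by rw [Finset.mul_sum]
  rw [Finset.sum_congr rfl h1]
  simp only [Finset.mul_sum, Finset.sum_mul]
  rw [Finset.sum_comm]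
  exact Finset.sum_congr rfl fun i _ => Finset.sum_congr rfl fun j _ => by ring

lemma RhatQR_diff (n p : ℕ) (u : ℝ) (x : Fin n → Fin p → ℝ) (ytil : Fin n → ℝ)
    (ηu : Fin p → ℝ) (r : Fin n → ℝ) (ηtil : Fin p → ℝ) :
    RhatQR n p u x ytil ηu r ηtil - RhatQR n p u x ytil ηu r ηu =
      ((1 / (n : ℝ)) * ∑ i, rhoCheck u (ytil i - ∑ j, x i j * ηtil j) -
        (1 / (n : ℝ)) * ∑ i, rhoCheck u (ytil i - ∑ j, x i j * ηu j)) -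
      ∑ j, ((1 / (n : ℝ)) * ∑ i,
          (u - if ytil i ≤ (∑ j', x i j' * ηu j') + r i then 1 else 0) * x i j) *
        (ηtil j - ηu j) := by
  simp only [RhatQR]
  rw [sum_swap_helper n p
    (fun i => u - if ytil i ≤ (∑ j', x i j' * ηu j') + r i then 1 else 0) r x ηtil ηu]
  ring

/-- Restricted-set inclusion for `ℓ₁`-penalized quantile regression.  Suppose the
regularization event `λ_u/n ≥ c ‖E_n[(u − 1{ỹ_i ≤ x̃_i'η_u + r_{ui}}) x̃_i]‖_∞` holds with
`c > 1`, and the Knight remainder `R̂` is nonnegative.  If `δ̃ = η̃ − η_u` satisfies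
`E_n[ρ_u(ỹ−x̃'η̃)] − E_n[ρ_u(ỹ−x̃'η_u)] ≤ (λ_u/n)(‖η_u‖₁ − ‖η̃‖₁)`, then, with
`c̄ = (c+1)/(c−1)` and `T_u = supp(η_u)`,
`‖δ̃_{T_u^c}‖₁ ≤ c̄ ‖δ̃_{T_u}‖₁ + (nc/(λ_u(c−1))) R̂(η_u)`. -/
theorem restricted_set_l1_qr (n p : ℕ) (hn : 0 < n)
    (x : Fin n → Fin p → ℝ) (ytil : Fin n → ℝ) (u : ℝ) (hu : u ∈ Set.Ioo (0:ℝ) 1)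
    (ηu : Fin p → ℝ) (r : Fin n → ℝ) (ηtil : Fin p → ℝ)
    (lam c : ℝ) (hc : 1 < c) (hlam : 0 < lam)
    (hreg : ∀ j : Fin p,
      c * |(1 / (n : ℝ)) * ∑ i,
        (u - if ytil i ≤ (∑ j', x i j' * ηu j') + r i then 1 else 0) * x i j| ≤ lam / n)
    (hRnn : ∀ η : Fin p → ℝ, 0 ≤ RhatQR n p u x ytil ηu r η)
    (hopt : (1 / (n : ℝ)) * ∑ i, rhoCheck u (ytil i - ∑ j, x i j * ηtil j) -
        (1 / (n : ℝ)) * ∑ i, rhoCheck u (ytil i - ∑ j, x i j * ηu j) ≤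
      (lam / n) * ((∑ j, |ηu j|) - ∑ j, |ηtil j|)) :
    ∑ j ∈ univ.filter (fun j => ηu j = 0), |ηtil j - ηu j| ≤
      ((c + 1) / (c - 1)) * ∑ j ∈ univ.filter (fun j => ηu j ≠ 0), |ηtil j - ηu j| +
        ((n : ℝ) * c / (lam * (c - 1))) * RhatQR n p u x ytil ηu r ηu := by
  have hN : (0:ℝ) < (n:ℝ) := Nat.cast_pos.mpr hn
  have hn0 : ((n:ℝ)) ≠ 0 := ne_of_gt hN
  have hc0 : (0:ℝ) < c := by linarith
  have hc1 : (0:ℝ) < c - 1 := by linarith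
  have hc10 : c - 1 ≠ 0 := ne_of_gt hc1
  have hlam0 : lam ≠ 0 := ne_of_gt hlam
  have hq : (0:ℝ) < lam / n := div_pos hlam hN
  set q : ℝ := lam / n with hqdef
  set S : Fin p → ℝ := fun j => (1 / (n : ℝ)) * ∑ i,
      (u - if ytil i ≤ (∑ j', x i j' * ηu j') + r i then 1 else 0) * x i j with hSdef
  set A : ℝ := ∑ j ∈ univ.filter (fun j => ηu j = 0), |ηtil j - ηu j| with hAdef
  set B : ℝ := ∑ j ∈ univ.filter (fun j => ηu j ≠ 0), |ηtil j - ηu j| with hBdef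
  set R0 : ℝ := RhatQR n p u x ytil ηu r ηu with hR0def
  have hregS : ∀ j, c * |S j| ≤ q := hreg
  have hfilter : (univ.filter (fun j => ¬ ηu j = 0) : Finset (Fin p))
      = univ.filter (fun j => ηu j ≠ 0) := by simp [ne_eq]
  -- ℓ1-norm difference bound
  have hnorm : (∑ j, |ηu j|) - ∑ j, |ηtil j| ≤ B - A := by
    have hsplit : (∑ j, (|ηu j| - |ηtil j|))
        = (∑ j ∈ univ.filter (fun j => ηu j = 0), (|ηu j| - |ηtil j|))
          + ∑ j ∈ univ.filter (fun j => ¬ ηu j = 0), (|ηu j| - |ηtil j|) :=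
      (Finset.sum_filter_add_sum_filter_not univ _ _).symm
    have ha : ∑ j ∈ univ.filter (fun j => ηu j = 0), (|ηu j| - |ηtil j|) = -A := by
      rw [hAdef, ← Finset.sum_neg_distrib]
      refine Finset.sum_congr rfl fun j hj => ?_
      have h0 : ηu j = 0 := (Finset.mem_filter.mp hj).2
      simp [h0]
    have hb : ∑ j ∈ univ.filter (fun j => ¬ ηu j = 0), (|ηu j| - |ηtil j|) ≤ B := by
      rw [hBdef, ← hfilter]
      refine Finset.sum_le_sum fun j _ => ?_
      calc |ηu j| - |ηtil j| ≤ |ηu j - ηtil j| := abs_sub_abs_le_abs_sub _ _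
        _ = |ηtil j - ηu j| := abs_sub_comm _ _
    have : (∑ j, |ηu j|) - ∑ j, |ηtil j| = ∑ j, (|ηu j| - |ηtil j|) :=
      (Finset.sum_sub_distrib _ _).symm
    rw [this, hsplit, ha]
    linarith
  -- bound on the linear term
  have hABsum : A + B = ∑ j, |ηtil j - ηu j| := by
    rw [hAdef, hBdef, ← hfilter]
    exact Finset.sum_filter_add_sum_filter_not univ _ _
  have hSd1 : c * |∑ j, S j * (ηtil j - ηu j)| ≤ q * (A + B) := by
    have h1 : |∑ j, S j * (ηtil j - ηu j)| ≤ ∑ j, |S j| * |ηtil j - ηu j| := by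
      calc |∑ j, S j * (ηtil j - ηu j)| ≤ ∑ j, |S j * (ηtil j - ηu j)| :=
            Finset.abs_sum_le_sum_abs _ _
        _ = ∑ j, |S j| * |ηtil j - ηu j| := Finset.sum_congr rfl fun j _ => abs_mul _ _
    have h2 : ∑ j, (c * |S j|) * |ηtil j - ηu j| ≤ ∑ j, q * |ηtil j - ηu j| :=
      Finset.sum_le_sum fun j _ => mul_le_mul_of_nonneg_right (hregS j) (abs_nonneg _)
    calc c * |∑ j, S j * (ηtil j - ηu j)|
        ≤ c * ∑ j, |S j| * |ηtil j - ηu j| := mul_le_mul_of_nonneg_left h1 hc0.le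
      _ = ∑ j, (c * |S j|) * |ηtil j - ηu j| := by
          rw [Finset.mul_sum]; exact Finset.sum_congr rfl fun j _ => by ring
      _ ≤ ∑ j, q * |ηtil j - ηu j| := h2
      _ = q * (A + B) := by rw [hABsum, Finset.mul_sum]
  -- Knight identity
  have hdiff : RhatQR n p u x ytil ηu r ηtil - R0 =
      ((1 / (n : ℝ)) * ∑ i, rhoCheck u (ytil i - ∑ j, x i j * ηtil j) -
        (1 / (n : ℝ)) * ∑ i, rhoCheck u (ytil i - ∑ j, x i j * ηu j)) -
      ∑ j, S j * (ηtil j - ηu j) := RhatQR_diff n p u x ytil ηu r ηtil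
  have hRt : 0 ≤ RhatQR n p u x ytil ηu r ηtil := hRnn ηtil
  have hSd2 : (∑ j, S j * (ηtil j - ηu j)) ≤ q * (B - A) + R0 := by
    have h4 : (1 / (n : ℝ)) * ∑ i, rhoCheck u (ytil i - ∑ j, x i j * ηtil j) -
        (1 / (n : ℝ)) * ∑ i, rhoCheck u (ytil i - ∑ j, x i j * ηu j) ≤ q * (B - A) :=
      le_trans hopt (mul_le_mul_of_nonneg_left hnorm hq.le)
    linarith
  have h5 : -(q * (A + B)) ≤ c * (∑ j, S j * (ηtil j - ηu j)) := by
    have h6 := mul_le_mul_of_nonneg_left (neg_abs_le (∑ j, S j * (ηtil j - ηu j))) hc0.le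
    nlinarith [hSd1]
  have h6 : c * (∑ j, S j * (ηtil j - ηu j)) ≤ c * (q * (B - A) + R0) :=
    mul_le_mul_of_nonneg_left hSd2 hc0.le
  have hfin : q * (c - 1) * A ≤ q * (c + 1) * B + c * R0 := by nlinarith [h5, h6]
  have hqc : 0 < q * (c - 1) := mul_pos hq hc1
  rw [← mul_le_mul_iff_right₀ hqc]
  have heq : q * (c - 1) * (((c + 1) / (c - 1)) * B + ((n : ℝ) * c / (lam * (c - 1))) * R0)
      = q * (c + 1) * B + c * R0 := by
    rw [hqdef]; field_simp
  rw [heq]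
  exact hfin
end

section
/- In the quantile model ỹ_i = x̃_i'η_u + r_{ui} + ε_i with u-quantile(ε_i | x̃_i) = 0 and conditional density bounded by f̄, the Knight-identity remainder R̂(η_u) = −E_n[r_{ui} ∫₀¹ (1{ε_{ui} ≤ −t r_{ui}} − 1{ε_{ui} ≤ 0}) dt] is nonnegative and satisfies Ē[R̂(η_u)] ≤ f̄ ‖r_{ui}‖²_{2,n}/2. -/
open MeasureTheory intervalIntegral Finset

/-- Nonnegativity and expectation bound for the Knight-identity remainder.  In the quantile model
`ỹ_i = x̃_i'η_u + r_{ui} + ε_i` with `u`-quantile(`ε_i` | `x̃_i`) `= 0` (i.e. `F_i(0) = u`) and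
conditional density `f_i` bounded by `f̄`, the remainder
`R̂(η_u) = −E_n[r_{ui} ∫₀¹ (1{ε_{ui} ≤ −t r_{ui}} − 1{ε_{ui} ≤ 0}) dt]`
is nonnegative and satisfies `Ē[R̂(η_u)] ≤ f̄ ‖r_{ui}‖²_{2,n} / 2`. -/
theorem knight_remainder_bound
    {Ω : Type*} [MeasurableSpace Ω] (μ : Measure Ω) [IsProbabilityMeasure μ]
    (n : ℕ) (hn : 0 < n) (ε : Fin n → Ω → ℝ) (hεmeas : ∀ i, Measurable (ε i))
    (r : Fin n → ℝ) (F f : Fin n → ℝ → ℝ) (fbar u : ℝ) (hu : u ∈ Set.Ioo (0:ℝ) 1)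
    (hcdf : ∀ i t, F i t = (μ {ω | ε i ω ≤ t}).toReal)
    (hFderiv : ∀ i t, HasDerivAt (F i) (f i t) t)
    (hfnn : ∀ i t, 0 ≤ f i t) (hfb : ∀ i t, f i t ≤ fbar)
    (hquant : ∀ i, F i 0 = u) :
    (∀ ω, 0 ≤ -((1 / (n : ℝ)) * ∑ i, r i *
        ∫ t in (0:ℝ)..1, ((if ε i ω ≤ -t * r i then (1:ℝ) else 0) -
          if ε i ω ≤ 0 then 1 else 0))) ∧
    (∫ ω, -((1 / (n : ℝ)) * ∑ i, r i *
        ∫ t in (0:ℝ)..1, ((if ε i ω ≤ -t * r i then (1:ℝ) else 0) -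
          if ε i ω ≤ 0 then 1 else 0)) ∂μ) ≤
      fbar * ((1 / (n : ℝ)) * ∑ i, (r i) ^ 2) / 2 := by
  have hfbar : 0 ≤ fbar := le_trans (hfnn ⟨0, hn⟩ 0) (hfb ⟨0, hn⟩ 0)
  have hn' : (0:ℝ) ≤ 1 / (n:ℝ) := by positivity
  -- Part 1 : pointwise nonnegativity
  have key : ∀ (i : Fin n) (ω : Ω), r i *
      (∫ t in (0:ℝ)..1, ((if ε i ω ≤ -t * r i then (1:ℝ) else 0) -
        if ε i ω ≤ 0 then 1 else 0)) ≤ 0 := by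
    intro i ω
    rw [← intervalIntegral.integral_const_mul]
    have h : (0:ℝ) ≤ ∫ t in (0:ℝ)..1,
        -(r i * ((if ε i ω ≤ -t * r i then (1:ℝ) else 0) - if ε i ω ≤ 0 then 1 else 0)) := by
      apply intervalIntegral.integral_nonneg zero_le_one
      intro t ht
      rcases le_or_gt 0 (r i) with hr | hr
      · have htr : -t * r i ≤ 0 := by
          have := ht.1; nlinarith
        have : (if ε i ω ≤ -t * r i then (1:ℝ) else 0) ≤ (if ε i ω ≤ 0 then 1 else 0) := by
          split_ifs with h1 h2 <;> try norm_num
          exact absurd (le_trans h1 htr) h2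
        nlinarith
      · have htr : 0 ≤ -t * r i := by
          have := ht.1; nlinarith
        have : (if ε i ω ≤ 0 then (1:ℝ) else 0) ≤ (if ε i ω ≤ -t * r i then 1 else 0) := by
          split_ifs with h1 h2 <;> try norm_num
          exact absurd (le_trans h1 htr) h2
        nlinarith
    rw [intervalIntegral.integral_neg] at h
    linarith
  have part1 : ∀ ω, 0 ≤ -((1 / (n : ℝ)) * ∑ i, r i *
      ∫ t in (0:ℝ)..1, ((if ε i ω ≤ -t * r i then (1:ℝ) else 0) -
        if ε i ω ≤ 0 then 1 else 0)) := by
    intro ω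
    have hsum : (∑ i, r i * ∫ t in (0:ℝ)..1,
        ((if ε i ω ≤ -t * r i then (1:ℝ) else 0) - if ε i ω ≤ 0 then 1 else 0)) ≤ 0 :=
      Finset.sum_nonpos fun i _ => key i ω
    nlinarith
  refine ⟨part1, ?_⟩
  -- Part 2 : expectation bound
  set ν : Measure ℝ := volume.restrict (Set.Ioc (0:ℝ) 1) with hν
  haveI : IsFiniteMeasure ν := ⟨by
    rw [hν, Measure.restrict_apply_univ]
    simp [Real.volume_Ioc]⟩
  set G : Fin n → Ω × ℝ → ℝ := fun i p =>
    ((if ε i p.1 ≤ -p.2 * r i then (1:ℝ) else 0) - if ε i p.1 ≤ 0 then 1 else 0) with hG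
  have hGmeas : ∀ i, Measurable (G i) := by
    intro i
    apply Measurable.sub
    · exact Measurable.ite
        (measurableSet_le ((hεmeas i).comp measurable_fst)
          ((measurable_snd.neg).mul_const _)) measurable_const measurable_const
    · exact Measurable.ite
        (measurableSet_le ((hεmeas i).comp measurable_fst) measurable_const)
        measurable_const measurable_const
  have hGint : ∀ i, Integrable (G i) (μ.prod ν) := by
    intro i
    refine (integrable_const (2:ℝ)).mono' (hGmeas i).aestronglyMeasurable ?_
    filter_upwards with p
    simp only [hG, Real.norm_eq_abs]
    split_ifs <;> norm_num
  -- inner ω-integral equals F i (-t * r i) - u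
  have hind : ∀ i (c : ℝ), Integrable (fun ω => if ε i ω ≤ c then (1:ℝ) else 0) μ := by
    intro i c
    refine (integrable_const (1:ℝ)).mono'
      ((Measurable.ite (measurableSet_le (hεmeas i) measurable_const)
        measurable_const measurable_const).aestronglyMeasurable) ?_
    filter_upwards with ω
    rw [Real.norm_eq_abs]
    split_ifs <;> norm_num
  have hindval : ∀ i (c : ℝ), (∫ ω, (if ε i ω ≤ c then (1:ℝ) else 0) ∂μ) = F i c := by
    intro i c
    have hset : MeasurableSet {ω | ε i ω ≤ c} := measurableSet_le (hεmeas i) measurable_const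
    have : (fun ω => if ε i ω ≤ c then (1:ℝ) else 0)
        = Set.indicator {ω | ε i ω ≤ c} (fun _ => (1:ℝ)) := by
      ext ω; simp [Set.indicator_apply, Set.mem_setOf_eq]
    rw [this, MeasureTheory.integral_indicator_const (1:ℝ) hset, smul_eq_mul, mul_one, hcdf]
    rfl
  have hinner : ∀ i t, (∫ ω, G i (ω, t) ∂μ) = F i (-t * r i) - u := by
    intro i t
    rw [hG]
    simp only
    rw [integral_sub (hind i _) (hind i _), hindval, hindval, hquant]
  -- Lipschitz bound on F
  have hlip : ∀ i, LipschitzWith (Real.toNNReal fbar) (F i) := by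
    intro i
    apply lipschitzWith_of_nnnorm_deriv_le (fun x => (hFderiv i x).differentiableAt)
    intro x
    rw [(hFderiv i x).deriv, ← NNReal.coe_le_coe, coe_nnnorm, Real.norm_eq_abs,
      abs_of_nonneg (hfnn i x), Real.coe_toNNReal _ hfbar]
    exact hfb i x
  have hFbound : ∀ i t, t ∈ Set.Icc (0:ℝ) 1 → |F i (-t * r i) - u| ≤ fbar * (t * |r i|) := by
    intro i t ht
    have := (hlip i).dist_le_mul (-t * r i) 0
    rw [Real.dist_eq, Real.dist_eq, sub_zero, hquant i] at this
    calc |F i (-t * r i) - u| ≤ (Real.toNNReal fbar : ℝ) * |(-t * r i)| := this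
      _ = fbar * (t * |r i|) := by
          rw [Real.coe_toNNReal _ hfbar, abs_mul, abs_neg, abs_of_nonneg ht.1]
  -- continuity of F
  have hFcont : ∀ i, Continuous (F i) :=
    fun i => Differentiable.continuous (fun x => (hFderiv i x).differentiableAt)
  -- the t-integral lower bound
  have hTint : ∀ i, -(fbar * (r i)^2 / 2) ≤ r i * ∫ t, (F i (-t * r i) - u) ∂ν := by
    intro i
    have h1 : (∫ t, (F i (-t * r i) - u) ∂ν) = ∫ t in (0:ℝ)..1, (F i (-t * r i) - u) :=
      (intervalIntegral.integral_of_le zero_le_one).symm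
    rw [h1, ← intervalIntegral.integral_const_mul]
    have hc : Continuous (fun t : ℝ => r i * (F i (-t * r i) - u)) := by
      apply Continuous.mul continuous_const
      exact ((hFcont i).comp ((continuous_neg.comp continuous_id).mul continuous_const)).sub
        continuous_const
    have hmono : ∫ t in (0:ℝ)..1, -(fbar * (r i)^2 * t) ≤
        ∫ t in (0:ℝ)..1, r i * (F i (-t * r i) - u) := by
      apply intervalIntegral.integral_mono_on zero_le_one
        (Continuous.intervalIntegrable (by continuity) _ _)
        (hc.intervalIntegrable _ _)
      intro t ht
      have hb := hFbound i t ht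
      have h2 : |r i * (F i (-t * r i) - u)| ≤ fbar * (r i)^2 * t := by
        rw [abs_mul]
        calc |r i| * |F i (-t * r i) - u| ≤ |r i| * (fbar * (t * |r i|)) := by
              exact mul_le_mul_of_nonneg_left hb (abs_nonneg _)
          _ = fbar * (r i)^2 * t := by rw [← sq_abs]; ring
      linarith [neg_abs_le (r i * (F i (-t * r i) - u))]
    have heval : ∫ t in (0:ℝ)..1, -(fbar * (r i)^2 * t) = -(fbar * (r i)^2 / 2) := by
      rw [intervalIntegral.integral_neg, intervalIntegral.integral_const_mul,
        integral_id]
      ring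
    rw [heval] at hmono
    exact hmono
  -- swap and assemble
  have hswap : ∀ i, (∫ ω, ∫ t, G i (ω, t) ∂ν ∂μ) = ∫ t, (F i (-t * r i) - u) ∂ν := by
    intro i
    rw [MeasureTheory.integral_integral_swap (hGint i)]
    exact integral_congr_ae (Filter.Eventually.of_forall fun t => hinner i t)
  have hIi_int : ∀ i, Integrable (fun ω => ∫ t in (0:ℝ)..1,
      ((if ε i ω ≤ -t * r i then (1:ℝ) else 0) - if ε i ω ≤ 0 then 1 else 0)) μ := by
    intro i
    have h := (hGint i).integral_prod_left
    have heq : (fun ω => ∫ t in (0:ℝ)..1,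
        ((if ε i ω ≤ -t * r i then (1:ℝ) else 0) - if ε i ω ≤ 0 then 1 else 0))
        = fun ω => ∫ t, G i (ω, t) ∂ν := by
      ext ω
      rw [intervalIntegral.integral_of_le zero_le_one]
    rw [heq]
    exact h
  have hexp : (∫ ω, -((1 / (n : ℝ)) * ∑ i, r i *
      ∫ t in (0:ℝ)..1, ((if ε i ω ≤ -t * r i then (1:ℝ) else 0) -
        if ε i ω ≤ 0 then 1 else 0)) ∂μ)
      = -((1 / (n : ℝ)) * ∑ i, r i * ∫ t, (F i (-t * r i) - u) ∂ν) := by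
    rw [MeasureTheory.integral_neg, MeasureTheory.integral_const_mul]
    congr 1
    congr 1
    rw [MeasureTheory.integral_finset_sum _ (fun i _ => (hIi_int i).const_mul (r i))]
    refine Finset.sum_congr rfl fun i _ => ?_
    rw [MeasureTheory.integral_const_mul]
    congr 1
    rw [← hswap i]
    refine integral_congr_ae (Filter.Eventually.of_forall fun ω => ?_)
    show (∫ t in (0:ℝ)..1, ((if ε i ω ≤ -t * r i then (1:ℝ) else 0) -
        if ε i ω ≤ 0 then 1 else 0)) = ∫ t, G i (ω, t) ∂ν
    rw [intervalIntegral.integral_of_le zero_le_one]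
  rw [hexp]
  have hsum_le : -(∑ i, r i * ∫ t, (F i (-t * r i) - u) ∂ν) ≤ ∑ i, fbar * (r i)^2 / 2 := by
    rw [← Finset.sum_neg_distrib]
    exact Finset.sum_le_sum fun i _ => by linarith [hTint i]
  calc -((1 / (n : ℝ)) * ∑ i, r i * ∫ t, (F i (-t * r i) - u) ∂ν)
      = (1 / (n : ℝ)) * -(∑ i, r i * ∫ t, (F i (-t * r i) - u) ∂ν) := by ring
    _ ≤ (1 / (n : ℝ)) * ∑ i, fbar * (r i)^2 / 2 := mul_le_mul_of_nonneg_left hsum_le hn'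
    _ = fbar * ((1 / (n : ℝ)) * ∑ i, (r i) ^ 2) / 2 := by
        rw [← Finset.sum_div, ← Finset.mul_sum]
        ring
end
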